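/- The presented group K₂ = ⟨m, b ∣ [m, b²] = 1, [m², b] = 1⟩ is not abelian. -/

import Mathlib

open scoped commutatorElement

/-- The relators of `K₂ = ⟨m, b ∣ [m, b²] = 1, [m², b] = 1⟩`, with generators
`m = 0`, `b = 1`. -/
def relsK2 : Set (FreeGroup (Fin 2)) :=
  let m : FreeGroup (Fin 2) := FreeGroup.of 0
  let b : FreeGroup (Fin 2) := FreeGroup.of 1
  { ⁅m, b ^ 2⁆, ⁅m ^ 2, b⁆ }

/-- `K₂ = ⟨m, b ∣ [m, b²] = 1, [m², b] = 1⟩`. -/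
abbrev K2 := PresentedGroup relsK2

/-- Map generators to `i` and `j` in the quaternion group `Q₈`. -/
def fK2 : Fin 2 → QuaternionGroup 2 :=
  ![QuaternionGroup.a 1, QuaternionGroup.xa 0]

lemma fK2_rels : ∀ r ∈ relsK2, FreeGroup.lift fK2 r = 1 := by
  intro r hr
  rcases hr with h | h <;> subst h <;>
    simp [commutatorElement_def, fK2] <;> decide

/-- `K₂` is not abelian. -/
theorem K2_not_abelian : ∃ x y : K2, x * y ≠ y * x := by
  refine ⟨PresentedGroup.of 0, PresentedGroup.of 1, fun h => ?_⟩
  have := congrArg (PresentedGroup.toGroup fK2_rels) h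
  simp only [map_mul, PresentedGroup.toGroup.of] at this
  revert this
  decide
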